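/- arXiv:1106.5177 — 5 statements merged into one kernel-verified Lean document; each statement's English description precedes it below -/
import Mathlib

section
/- Let A ∈ ℂ^{N×M} have unit-norm columns and let x be s-sparse with support {J_1,…,J_s} and x_max = max_j |x_J_j|. Let η > 0 and suppose |⟨a_i, a_j⟩| ≤ η for all distinct i, j ∈ supp(x). If b = Ax + e, then for J_max the index achieving |x_{J_max}| = x_max, one has |⟨b, a_{J_max}⟩| ≥ x_max − (s−1)η·x_max − ‖e‚‖₂. -/
/-- Lower bound on the matched-filter output at the largest component. -/
theorem matched_filter_lower_bound_at_max
    {N M : ℕ} (a : Fin M → EuclideanSpace ℂ (Fin N))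
    (ha : ∀ j, ‖a j‖ = 1)
    (x : Fin M → ℂ) (S : Finset (Fin M)) (s : ℕ)
    (hcard : S.card = s)
    (hsupp : ∀ j, x j ≠ 0 ↔ j ∈ S)
    (η : ℝ) (hη : 0 < η)
    (hband : ∀ i ∈ S, ∀ j ∈ S, i ≠ j → ‖(inner ℂ (a i) (a j) : ℂ)‖ ≤ η)
    (e b : EuclideanSpace ℂ (Fin N))
    (hb : b = (∑ j, x j • a j) + e)
    (Jmax : Fin M) (hJmax : Jmax ∈ S)
    (hmax : ∀ j ∈ S, ‖x j‖ ≤ ‖x Jmax‖) :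
    ‖(inner ℂ b (a Jmax) : ℂ)‖ ≥
      ‖x Jmax‖ - ((s : ℝ) - 1) * η * ‖x Jmax‖ - ‖e‖ := by
  have hexp : (inner ℂ b (a Jmax) : ℂ) =
      (starRingEnd ℂ) (x Jmax) * inner ℂ (a Jmax) (a Jmax)
        + (∑ j ∈ S.erase Jmax, (starRingEnd ℂ) (x j) * inner ℂ (a j) (a Jmax))
        + inner ℂ e (a Jmax) := by
    rw [hb, inner_add_left, sum_inner]
    congr 1
    have hS : (∑ j, (inner ℂ (x j • a j) (a Jmax) : ℂ))
        = ∑ j ∈ S, (starRingEnd ℂ) (x j) * inner ℂ (a j) (a Jmax) := by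
      rw [← Finset.sum_subset (Finset.subset_univ S)]
      · exact Finset.sum_congr rfl (fun j _ => inner_smul_left _ _ _)
      · intro j _ hj
        have : x j = 0 := by
          by_contra h; exact hj ((hsupp j).1 h)
        simp [this]
    rw [hS, ← Finset.add_sum_erase _ _ hJmax]
  have h11 : (inner ℂ (a Jmax) (a Jmax) : ℂ) = 1 := by
    rw [inner_self_eq_norm_sq_to_K, ha]
    norm_num
  have hsumbound : ‖∑ j ∈ S.erase Jmax, (starRingEnd ℂ) (x j) * inner ℂ (a j) (a Jmax)‖
      ≤ ((s : ℝ) - 1) * η * ‖x Jmax‖ := by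
    calc ‖∑ j ∈ S.erase Jmax, (starRingEnd ℂ) (x j) * inner ℂ (a j) (a Jmax)‖
        ≤ ∑ j ∈ S.erase Jmax, ‖(starRingEnd ℂ) (x j) * (inner ℂ (a j) (a Jmax) : ℂ)‖ :=
          norm_sum_le _ _
      _ ≤ ∑ j ∈ S.erase Jmax, ‖x Jmax‖ * η := by
          apply Finset.sum_le_sum
          intro j hj
          have hjS := Finset.mem_of_mem_erase hj
          have hne := Finset.ne_of_mem_erase hj
          rw [norm_mul, RingHomIsometric.norm_map]
          exact mul_le_mul (hmax j hjS) (hband j hjS Jmax hJmax hne) (norm_nonneg _)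
            (norm_nonneg _)
      _ = ((s : ℝ) - 1) * η * ‖x Jmax‖ := by
          rw [Finset.sum_const, Finset.card_erase_of_mem hJmax, hcard]
          have hs : 1 ≤ s := by
            rw [← hcard]; exact Finset.card_pos.2 ⟨Jmax, hJmax⟩
          have : ((s - 1 : ℕ) : ℝ) = (s : ℝ) - 1 := by
            push_cast [hs]; ring
          rw [nsmul_eq_mul, this]; ring
  have herr : ‖(inner ℂ e (a Jmax) : ℂ)‖ ≤ ‖e‖ := by
    calc ‖(inner ℂ e (a Jmax) : ℂ)‖ ≤ ‖e‖ * ‖a Jmax‖ := norm_inner_le_norm _ _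
      _ = ‖e‖ := by rw [ha]; ring
  rw [hexp, h11, mul_one]
  have h1 : ‖(starRingEnd ℂ) (x Jmax)‖ = ‖x Jmax‖ := RingHomIsometric.norm_map
  calc ‖(starRingEnd ℂ) (x Jmax)
        + (∑ j ∈ S.erase Jmax, (starRingEnd ℂ) (x j) * inner ℂ (a j) (a Jmax))
        + inner ℂ e (a Jmax)‖
      ≥ ‖(starRingEnd ℂ) (x Jmax)‖
        - ‖∑ j ∈ S.erase Jmax, (starRingEnd ℂ) (x j) * inner ℂ (a j) (a Jmax)‖
        - ‖(inner ℂ e (a Jmax) : ℂ)‖ := by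
        have : ‖(starRingEnd ℂ) (x Jmax)
            + ∑ j ∈ S.erase Jmax, (starRingEnd ℂ) (x j) * inner ℂ (a j) (a Jmax)‖
            ≤ ‖(starRingEnd ℂ) (x Jmax)
            + (∑ j ∈ S.erase Jmax, (starRingEnd ℂ) (x j) * inner ℂ (a j) (a Jmax))
            + inner ℂ e (a Jmax)‖ + ‖(inner ℂ e (a Jmax) : ℂ)‖ := by
          simpa [add_assoc] using norm_add_le
            ((starRingEnd ℂ) (x Jmax)
              + (∑ j ∈ S.erase Jmax, (starRingEnd ℂ) (x j) * inner ℂ (a j) (a Jmax))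
              + inner ℂ e (a Jmax))
            (-(inner ℂ e (a Jmax) : ℂ))
        have h2 := norm_sub_norm_le ((starRingEnd ℂ) (x Jmax))
          (-(∑ j ∈ S.erase Jmax, (starRingEnd ℂ) (x j) * inner ℂ (a j) (a Jmax)))
        simp only [sub_neg_eq_add, norm_neg] at h2
        linarith
    _ ≥ ‖x Jmax‖ - ((s : ℝ) - 1) * η * ‖x Jmax‖ - ‖e‖ := by
        rw [h1]; linarith
end

section
/- Let A ∈ ℂ^{N×M} with unit-norm columns, x s-sparse, b = Ax + e, and η > 0. Define the η-coherence band B_η(k) = {i : |⟨a_i,a_k⟩| > η} and B_η(S) = ∪_{k∈S} B_η(k). Suppose |⟨a_i, a_j⟩| ≤ η for all distinct i, j ∈ supp(x), and suppose (2s−1)η + 2‖e‖₂/x_max < 1 where x_max = max over support of |x_j|. Then argmax_l |⟨b, a_l⟩| belongs to B_η(supp(x)) ∪ supp(x); in particular any index l maximizing |⟨b,a_l⟩| satisfies |⟨a_l, a_j⟩| > η for some j ∈ supp(x), or l ∈ supp(x). -/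
/-- Base case of the BOMP guarantee: the maximizer of |⟨b, a_l⟩| lies in the
η-coherence band of supp(x) or in supp(x) itself. -/
theorem bomp_base_case
    {N M : ℕ} (a : Fin M → EuclideanSpace ℂ (Fin N))
    (ha : ∀ j, ‖a j‖ = 1)
    (x : Fin M → ℂ) (S : Finset (Fin M)) (s : ℕ)
    (hcard : S.card = s)
    (hsupp : ∀ j, x j ≠ 0 ↔ j ∈ S)
    (e b : EuclideanSpace ℂ (Fin N))
    (hb : b = (∑ j, x j • a j) + e)
    (η : ℝ) (hη : 0 < η)
    (hband : ∀ i ∈ S, ∀ j ∈ S, i ≠ j → ‖(inner ℂ (a i) (a j) : ℂ)‖ ≤ η)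
    (xmax : ℝ) (hxmaxpos : 0 < xmax)
    (hxmax : ∀ j ∈ S, ‖x j‖ ≤ xmax)
    (hxmax_att : ∃ j ∈ S, ‖x j‖ = xmax)
    (hcond : (2 * (s : ℝ) - 1) * η + 2 * ‖e‖ / xmax < 1) :
    ∀ l : Fin M, (∀ j : Fin M, ‖(inner ℂ b (a j) : ℂ)‖ ≤ ‖(inner ℂ b (a l) : ℂ)‖) →
      (∃ j ∈ S, η < ‖(inner ℂ (a l) (a j) : ℂ)‖) ∨ l ∈ S := by
  intro l hmax
  by_contra hcon
  push_neg at hcon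
  obtain ⟨hno, hlS⟩ := hcon
  obtain ⟨j0, hj0S, hj0⟩ := hxmax_att
  have hs1 : 1 ≤ (s : ℝ) := by
    have h := Finset.card_pos.mpr ⟨j0, hj0S⟩
    rw [hcard] at h
    exact_mod_cast h
  -- expansion of ⟨b, a k⟩
  have key : ∀ k, (inner ℂ b (a k) : ℂ)
      = (∑ j ∈ S, (starRingEnd ℂ) (x j) * inner ℂ (a j) (a k)) + inner ℂ e (a k) := by
    intro k
    rw [hb, inner_add_left, sum_inner]
    congr 1
    rw [← Finset.sum_subset (Finset.subset_univ S)]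
    · exact Finset.sum_congr rfl fun j _ => inner_smul_left _ _ _
    · intro j _ hj
      have hx0 : x j = 0 := by
        by_contra h; exact hj ((hsupp j).mp h)
      rw [inner_smul_left, hx0]; simp
  have hnorm_sym : ∀ i j, ‖(inner ℂ (a i) (a j) : ℂ)‖ = ‖(inner ℂ (a j) (a i) : ℂ)‖ := by
    intro i j
    rw [← inner_conj_symm]
    exact (RCLike.norm_conj _)
  have he_bd : ∀ k, ‖(inner ℂ e (a k) : ℂ)‖ ≤ ‖e‖ := by
    intro k
    calc ‖(inner ℂ e (a k) : ℂ)‖ ≤ ‖e‖ * ‖a k‖ := norm_inner_le_norm _ _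
      _ = ‖e‖ := by rw [ha k, mul_one]
  -- upper bound at l
  have hub : ‖(inner ℂ b (a l) : ℂ)‖ ≤ (s : ℝ) * η * xmax + ‖e‖ := by
    rw [key l]
    calc ‖(∑ j ∈ S, (starRingEnd ℂ) (x j) * inner ℂ (a j) (a l)) + (inner ℂ e (a l) : ℂ)‖
        ≤ ‖∑ j ∈ S, (starRingEnd ℂ) (x j) * (inner ℂ (a j) (a l) : ℂ)‖ + ‖(inner ℂ e (a l) : ℂ)‖ :=
          norm_add_le _ _
      _ ≤ (∑ j ∈ S, ‖(starRingEnd ℂ) (x j) * (inner ℂ (a j) (a l) : ℂ)‖) + ‖e‖ := by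
          gcongr
          · exact norm_sum_le _ _
          · exact he_bd l
      _ ≤ (∑ j ∈ S, xmax * η) + ‖e‖ := by
          gcongr with j hj
          rw [norm_mul, RCLike.norm_conj]
          have h1 : ‖x j‖ ≤ xmax := hxmax j hj
          have h2 : ‖(inner ℂ (a j) (a l) : ℂ)‖ ≤ η := by
            rw [hnorm_sym]; exact le_of_not_gt (fun h => (hno j hj).not_gt h) |>.trans le_rfl
          exact mul_le_mul h1 h2 (norm_nonneg _) (le_of_lt hxmaxpos)
      _ = (s : ℝ) * η * xmax + ‖e‖ := by
          rw [Finset.sum_const, hcard, nsmul_eq_mul]; ring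
  -- lower bound at j0
  have haself : (inner ℂ (a j0) (a j0) : ℂ) = 1 := by
    have := inner_self_eq_norm_sq_to_K (𝕜 := ℂ) (a j0)
    rw [this, ha j0]; norm_num
  have hlb : xmax - ((s : ℝ) - 1) * η * xmax - ‖e‖ ≤ ‖(inner ℂ b (a j0) : ℂ)‖ := by
    rw [key j0, Finset.sum_eq_add_sum_sdiff_singleton_of_mem hj0S]
    have hmain : ‖(starRingEnd ℂ) (x j0) * (inner ℂ (a j0) (a j0) : ℂ)‖ = xmax := by
      rw [haself, mul_one, RCLike.norm_conj, hj0]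
    have hrest : ‖(∑ j ∈ S \ {j0}, (starRingEnd ℂ) (x j) * (inner ℂ (a j) (a j0) : ℂ))
        + (inner ℂ e (a j0) : ℂ)‖ ≤ ((s : ℝ) - 1) * η * xmax + ‖e‖ := by
      calc ‖(∑ j ∈ S \ {j0}, (starRingEnd ℂ) (x j) * (inner ℂ (a j) (a j0) : ℂ))
            + (inner ℂ e (a j0) : ℂ)‖
          ≤ (∑ j ∈ S \ {j0}, ‖(starRingEnd ℂ) (x j) * (inner ℂ (a j) (a j0) : ℂ)‖) + ‖e‖ := by
            refine (norm_add_le _ _).trans ?_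
            gcongr
            · exact norm_sum_le _ _
            · exact he_bd j0
        _ ≤ (∑ j ∈ S \ {j0}, xmax * η) + ‖e‖ := by
            gcongr with j hj
            rw [Finset.mem_sdiff, Finset.mem_singleton] at hj
            rw [norm_mul, RCLike.norm_conj]
            exact mul_le_mul (hxmax j hj.1) (hband j hj.1 j0 hj0S hj.2)
              (norm_nonneg _) (le_of_lt hxmaxpos)
        _ = ((s : ℝ) - 1) * η * xmax + ‖e‖ := by
            rw [Finset.sum_const]
            have hc : (S \ {j0}).card = s - 1 := by
              rw [Finset.sdiff_singleton_eq_erase, Finset.card_erase_of_mem hj0S, hcard]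
            rw [hc]
            have hs1' : 1 ≤ s := by exact_mod_cast hs1
            have : ((s - 1 : ℕ) : ℝ) = (s : ℝ) - 1 := by
              rw [Nat.cast_sub hs1']; norm_num
            rw [nsmul_eq_mul, this]; ring
    calc xmax - ((s : ℝ) - 1) * η * xmax - ‖e‖
        ≤ ‖(starRingEnd ℂ) (x j0) * (inner ℂ (a j0) (a j0) : ℂ)‖
          - ‖(∑ j ∈ S \ {j0}, (starRingEnd ℂ) (x j) * (inner ℂ (a j) (a j0) : ℂ))
            + (inner ℂ e (a j0) : ℂ)‖ := by
          rw [hmain]; linarith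
      _ ≤ ‖(starRingEnd ℂ) (x j0) * (inner ℂ (a j0) (a j0) : ℂ)
          + ((∑ j ∈ S \ {j0}, (starRingEnd ℂ) (x j) * (inner ℂ (a j) (a j0) : ℂ))
            + (inner ℂ e (a j0) : ℂ))‖ := by
          have h := norm_sub_norm_le ((starRingEnd ℂ) (x j0) * (inner ℂ (a j0) (a j0) : ℂ))
            (-((∑ j ∈ S \ {j0}, (starRingEnd ℂ) (x j) * (inner ℂ (a j) (a j0) : ℂ))
              + (inner ℂ e (a j0) : ℂ)))
          simpa only [norm_neg, sub_neg_eq_add] using h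
      _ = ‖((starRingEnd ℂ) (x j0) * (inner ℂ (a j0) (a j0) : ℂ)
          + (∑ j ∈ S \ {j0}, (starRingEnd ℂ) (x j) * (inner ℂ (a j) (a j0) : ℂ)))
            + (inner ℂ e (a j0) : ℂ)‖ := by ring_nf
  -- combine
  have hle := le_trans hlb (le_trans (hmax j0) hub)
  have hdv : 2 * ‖e‖ / xmax * xmax = 2 * ‖e‖ :=
    div_mul_cancel₀ _ (ne_of_gt hxmaxpos)
  have hcond' := mul_lt_mul_of_pos_right hcond hxmaxpos
  rw [add_mul, hdv, one_mul] at hcond'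
  nlinarith
end

section
/- Let A ∈ ℂ^{N×M} have unit-norm columns, let x be s-sparse with support {J_1,…,J_s}, b = Ax + e, and η > 0. Assume |⟨a_i, a_j⟩| ≤ η for all distinct i, j ∈ supp(x). If η(2s−1)·(x_max/x_min) + 2‖e‖₂/x_min < 1, then for every k ∈ supp(x) and every l with |⟨a_l, a_j⟩| ≤ η for all j ∈ supp(x), one has |⟨b, a_k⟩| > |⟨b, a_l⟩|. Hence the s largest values of |⟨b, a_j⟩| are attained at indices in the η-coherence band of supp(x). -/
/-- Band-excluded Matched Thresholding guarantee: the matched-filter output at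
true support indices dominates the output outside the η-coherence band. -/
theorem bmt_guarantee
    {N M : ℕ} (a : Fin M → EuclideanSpace ℂ (Fin N))
    (ha : ∀ j, ‖a j‖ = 1)
    (x : Fin M → ℂ) (S : Finset (Fin M)) (s : ℕ)
    (hcard : S.card = s)
    (hsupp : ∀ j, x j ≠ 0 ↔ j ∈ S)
    (e b : EuclideanSpace ℂ (Fin N))
    (hb : b = (∑ j, x j • a j) + e)
    (η : ℝ) (hη : 0 < η)
    (hband : ∀ i ∈ S, ∀ j ∈ S, i ≠ j → ‖(inner ℂ (a i) (a j) : ℂ)‖ ≤ η)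
    (xmin xmax : ℝ) (hxmin : 0 < xmin)
    (hxminle : ∀ j ∈ S, xmin ≤ ‖x j‖)
    (hxmaxle : ∀ j ∈ S, ‖x j‖ ≤ xmax)
    (hcond : η * (2 * (s : ℝ) - 1) * (xmax / xmin) + 2 * ‖e‖ / xmin < 1) :
    ∀ k ∈ S, ∀ l : Fin M, (∀ j ∈ S, ‖(inner ℂ (a l) (a j) : ℂ)‖ ≤ η) →
      ‖(inner ℂ b (a l) : ℂ)‖ < ‖(inner ℂ b (a k) : ℂ)‖ := by
  intro k hk l hl
  have hsum : ∀ v : EuclideanSpace ℂ (Fin N),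
      (inner ℂ b v : ℂ) = (∑ j ∈ S, (starRingEnd ℂ) (x j) * inner ℂ (a j) v) + inner ℂ e v := by
    intro v
    rw [hb, inner_add_left, sum_inner]
    congr 1
    rw [← Finset.sum_subset S.subset_univ]
    · exact Finset.sum_congr rfl fun j _ => inner_smul_left _ _ _
    · intro j _ hj
      have : x j = 0 := by
        by_contra h; exact hj ((hsupp j).mp h)
      simp [this, inner_smul_left]
  have hs1 : 1 ≤ (s : ℝ) := by
    have : 0 < S.card := Finset.card_pos.mpr ⟨k, hk⟩
    rw [hcard] at this
    exact_mod_cast this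
  have hxmax0 : xmin ≤ xmax := le_trans (hxminle k hk) (hxmaxle k hk)
  have hterm : ∀ j ∈ S, ‖(starRingEnd ℂ) (x j) * (inner ℂ (a j) (a l) : ℂ)‖ ≤ xmax * η := by
    intro j hj
    rw [norm_mul, RCLike.norm_conj]
    have h1 : ‖(inner ℂ (a j) (a l) : ℂ)‖ ≤ η := by
      rw [← norm_inner_symm]; exact hl j hj
    exact mul_le_mul (hxmaxle j hj) h1 (norm_nonneg _) (le_trans hxmin.le hxmax0)
  -- upper bound at l
  have hub : ‖(inner ℂ b (a l) : ℂ)‖ ≤ (s : ℝ) * (xmax * η) + ‖e‖ := by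
    rw [hsum]
    refine le_trans (norm_add_le _ _) (add_le_add ?_ ?_)
    · refine le_trans (norm_sum_le _ _) ?_
      calc (∑ j ∈ S, ‖(starRingEnd ℂ) (x j) * (inner ℂ (a j) (a l) : ℂ)‖)
          ≤ ∑ _j ∈ S, xmax * η := Finset.sum_le_sum hterm
        _ = (s : ℝ) * (xmax * η) := by rw [Finset.sum_const, hcard, nsmul_eq_mul]
    · calc ‖(inner ℂ e (a l) : ℂ)‖ ≤ ‖e‖ * ‖a l‖ := norm_inner_le_norm _ _
        _ = ‖e‖ := by rw [ha l, mul_one]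
  -- lower bound at k
  have hlb : xmin - (((s : ℝ) - 1) * (xmax * η) + ‖e‖) ≤ ‖(inner ℂ b (a k) : ℂ)‖ := by
    have hsplit : (∑ j ∈ S, (starRingEnd ℂ) (x j) * (inner ℂ (a j) (a k) : ℂ))
        = (starRingEnd ℂ) (x k) + ∑ j ∈ S.erase k, (starRingEnd ℂ) (x j) * inner ℂ (a j) (a k) := by
      rw [← Finset.add_sum_erase _ _ hk]
      congr 1
      have : (inner ℂ (a k) (a k) : ℂ) = 1 := by
        rw [inner_self_eq_norm_sq_to_K, ha k]; norm_num
      rw [this, mul_one]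
    have hR : ‖(∑ j ∈ S.erase k, (starRingEnd ℂ) (x j) * (inner ℂ (a j) (a k) : ℂ)) + inner ℂ e (a k)‖
        ≤ ((s : ℝ) - 1) * (xmax * η) + ‖e‖ := by
      refine le_trans (norm_add_le _ _) (add_le_add ?_ ?_)
      · refine le_trans (norm_sum_le _ _) ?_
        have hterm' : ∀ j ∈ S.erase k,
            ‖(starRingEnd ℂ) (x j) * (inner ℂ (a j) (a k) : ℂ)‖ ≤ xmax * η := by
          intro j hj
          have hjS := Finset.mem_of_mem_erase hj
          have hjk := Finset.ne_of_mem_erase hj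
          rw [norm_mul, RCLike.norm_conj]
          exact mul_le_mul (hxmaxle j hjS) (hband j hjS k hk hjk) (norm_nonneg _)
            (le_trans hxmin.le hxmax0)
        calc (∑ j ∈ S.erase k, ‖(starRingEnd ℂ) (x j) * (inner ℂ (a j) (a k) : ℂ)‖)
            ≤ ∑ _j ∈ S.erase k, xmax * η := Finset.sum_le_sum hterm'
          _ = ((s : ℝ) - 1) * (xmax * η) := by
              rw [Finset.sum_const, Finset.card_erase_of_mem hk, hcard, nsmul_eq_mul]
              have : (s : ℕ) ≥ 1 := by exact_mod_cast hs1
              rw [Nat.cast_sub this]; norm_num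
      · calc ‖(inner ℂ e (a k) : ℂ)‖ ≤ ‖e‖ * ‖a k‖ := norm_inner_le_norm _ _
          _ = ‖e‖ := by rw [ha k, mul_one]
    have := hsum (a k)
    rw [hsplit, add_assoc] at this
    rw [this]
    set c : ℂ := (starRingEnd ℂ) (x k) with hc
    set r : ℂ := (∑ j ∈ S.erase k, (starRingEnd ℂ) (x j) * (inner ℂ (a j) (a k) : ℂ)) + inner ℂ e (a k) with hr
    have h1 : ‖c‖ - ‖r‖ ≤ ‖c + r‖ := by
      have h := norm_add_le (c + r) (-r)
      simp only [add_neg_cancel_right, norm_neg] at h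
      linarith
    have h2 : xmin ≤ ‖c‖ := by
      rw [hc, RCLike.norm_conj]; exact hxminle k hk
    linarith
  -- arithmetic
  have hkey : η * (2 * (s : ℝ) - 1) * xmax + 2 * ‖e‖ < xmin := by
    have hx : xmin ≠ 0 := ne_of_gt hxmin
    calc η * (2 * (s : ℝ) - 1) * xmax + 2 * ‖e‖
        = (η * (2 * (s : ℝ) - 1) * (xmax / xmin) + 2 * ‖e‖ / xmin) * xmin := by
          field_simp
      _ < 1 * xmin := mul_lt_mul_of_pos_right hcond hxmin
      _ = xmin := one_mul xmin
  have : (s : ℝ) * (xmax * η) + ‖e‖ < xmin - (((s : ℝ) - 1) * (xmax * η) + ‖e‖) := by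
    nlinarith [hkey]
  linarith
end

section
/- For k ∈ supp(x) with b = Ax + e, unit-norm columns, and |⟨a_i,a_j⟩| ≤ η for distinct support indices i, j: |⟨b, a_k⟩| ≥ x_min − (s−1)·η·x_max − ‖e‖₂. -/
/-- Lower bound for the matched-filter output at a true support index. -/
theorem matched_filter_lower_bound_on_support
    {N M : ℕ} (a : Fin M → EuclideanSpace ℂ (Fin N))
    (ha : ∀ j, ‖a j‖ = 1)
    (x : Fin M → ℂ) (S : Finset (Fin M)) (s : ℕ)
    (hcard : S.card = s)
    (hsupp : ∀ j, x j ≠ 0 ↔ j ∈ S)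
    (e b : EuclideanSpace ℂ (Fin N))
    (hb : b = (∑ j, x j • a j) + e)
    (η : ℝ) (hη : 0 < η)
    (hband : ∀ i ∈ S, ∀ j ∈ S, i ≠ j → ‖(inner ℂ (a i) (a j) : ℂ)‖ ≤ η)
    (xmin xmax : ℝ)
    (hxminle : ∀ j ∈ S, xmin ≤ ‖x j‖)
    (hxmaxle : ∀ j ∈ S, ‖x j‖ ≤ xmax) :
    ∀ k ∈ S, ‖(inner ℂ b (a k) : ℂ)‖ ≥ xmin - ((s : ℝ) - 1) * η * xmax - ‖e‖ := by
  intro k hk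
  have hx0 : ∀ j ∉ S, x j = 0 := by
    intro j hj
    by_contra h
    exact hj ((hsupp j).mp h)
  have hsum : (inner ℂ b (a k) : ℂ)
      = (starRingEnd ℂ) (x k) + (∑ j ∈ S.erase k, (starRingEnd ℂ) (x j) * inner ℂ (a j) (a k))
        + inner ℂ e (a k) := by
    rw [hb, inner_add_left, sum_inner]
    congr 1
    have h1 : ∀ j : Fin M, (inner ℂ (x j • a j) (a k) : ℂ) = (starRingEnd ℂ) (x j) * inner ℂ (a j) (a k) := by
      intro j; rw [inner_smul_left]
    have h2 : (∑ j, (inner ℂ (x j • a j) (a k) : ℂ)) = ∑ j ∈ S, (starRingEnd ℂ) (x j) * inner ℂ (a j) (a k) := by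
      rw [← Finset.sum_subset (Finset.subset_univ S)]
      · exact Finset.sum_congr rfl fun j _ => h1 j
      · intro j _ hj
        rw [h1, hx0 j hj, map_zero, zero_mul]
    rw [h2, ← Finset.add_sum_erase S _ hk]
    congr 1
    have : (inner ℂ (a k) (a k) : ℂ) = (‖a k‖ : ℂ) ^ 2 := inner_self_eq_norm_sq_to_K (a k)
    rw [this, ha k]
    simp
  have hxmax0 : 0 ≤ xmax := le_trans (norm_nonneg _) (hxmaxle k hk)
  have hBsum : ‖∑ j ∈ S.erase k, (starRingEnd ℂ) (x j) * (inner ℂ (a j) (a k) : ℂ)‖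
      ≤ ((s : ℝ) - 1) * η * xmax := by
    calc ‖∑ j ∈ S.erase k, (starRingEnd ℂ) (x j) * (inner ℂ (a j) (a k) : ℂ)‖
        ≤ ∑ j ∈ S.erase k, ‖(starRingEnd ℂ) (x j) * (inner ℂ (a j) (a k) : ℂ)‖ :=
          norm_sum_le _ _
      _ ≤ ∑ j ∈ S.erase k, xmax * η := by
          apply Finset.sum_le_sum
          intro j hj
          have hjS : j ∈ S := Finset.mem_of_mem_erase hj
          have hjk : j ≠ k := Finset.ne_of_mem_erase hj
          rw [norm_mul, RCLike.norm_conj]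
          exact mul_le_mul (hxmaxle j hjS) (hband j hjS k hk hjk) (norm_nonneg _) hxmax0
      _ = ((S.erase k).card : ℝ) * (xmax * η) := by rw [Finset.sum_const, nsmul_eq_mul]
      _ = ((s : ℝ) - 1) * η * xmax := by
          rw [Finset.card_erase_of_mem hk, hcard]
          have hs1 : 1 ≤ s := by
            rw [← hcard]; exact Finset.card_pos.mpr ⟨k, hk⟩
          rw [Nat.cast_sub hs1]
          push_cast; ring
  have hE : ‖(inner ℂ e (a k) : ℂ)‖ ≤ ‖e‖ := by
    calc ‖(inner ℂ e (a k) : ℂ)‖ ≤ ‖e‖ * ‖a k‖ := norm_inner_le_norm _ _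
      _ = ‖e‖ := by rw [ha k, mul_one]
  have hA : xmin ≤ ‖(starRingEnd ℂ) (x k)‖ := by
    rw [RCLike.norm_conj]; exact hxminle k hk
  rw [hsum]
  have h3 : ‖(starRingEnd ℂ) (x k)‖
      - ‖(∑ j ∈ S.erase k, (starRingEnd ℂ) (x j) * (inner ℂ (a j) (a k) : ℂ)) + inner ℂ e (a k)‖
      ≤ ‖(starRingEnd ℂ) (x k) + ((∑ j ∈ S.erase k, (starRingEnd ℂ) (x j) * inner ℂ (a j) (a k)) + inner ℂ e (a k))‖ := by
    have := norm_sub_norm_le ((starRingEnd ℂ) (x k))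
      (-((∑ j ∈ S.erase k, (starRingEnd ℂ) (x j) * (inner ℂ (a j) (a k) : ℂ)) + inner ℂ e (a k)))
    rwa [norm_neg, sub_neg_eq_add] at this
  have h4 : ‖(∑ j ∈ S.erase k, (starRingEnd ℂ) (x j) * (inner ℂ (a j) (a k) : ℂ)) + inner ℂ e (a k)‖
      ≤ ((s : ℝ) - 1) * η * xmax + ‖e‖ :=
    le_trans (norm_add_le _ _) (add_le_add hBsum hE)
  have : xmin - (((s : ℝ) - 1) * η * xmax + ‖e‖)
      ≤ ‖(starRingEnd ℂ) (x k) + ((∑ j ∈ S.erase k, (starRingEnd ℂ) (x j) * inner ℂ (a j) (a k)) + inner ℂ e (a k))‖ :=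
    le_trans (sub_le_sub hA h4) h3
  rw [add_assoc]
  linarith
end

section
/- Let A ∈ ℂ^{N×M} with unit-norm columns, x s-sparse, η > 0, b = Ax + e. Assume the separation condition B_η(i) ∩ B_η^{(2)}(j) = ∅ for all i, j ∈ supp(x), and η(5s−4)·(x_max/x_min) + (5/2)·‖e‖₂/x_min < 1. Then the output x̂ of s iterations of the Band-excluded Orthogonal Matching Pursuit (BOMP) satisfies: supp(x̂) ⊆ B_η(supp(x)), and there is an injective map f : supp(x̂) → supp(x) such that each i ∈ supp(x̂) lies in B_η(f(i)). -/
open Finset in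
section
variable {N M : ℕ}
local notation "⟪" x ", " y "⟫" => @inner ℂ _ _ x y

lemma bomp_inner_norm_symm (u v : EuclideanSpace ℂ (Fin N)) :
    ‖(⟪u, v⟫ : ℂ)‖ = ‖(⟪v, u⟫ : ℂ)‖ := by
  rw [← inner_conj_symm]; exact RCLike.norm_conj _

lemma bomp_inner_expand (a : Fin M → EuclideanSpace ℂ (Fin N)) (c : Fin M → ℂ)
    (u : EuclideanSpace ℂ (Fin N)) :
    (⟪u, ∑ j, c j • a j⟫ : ℂ) = ∑ j, c j * ⟪u, a j⟫ := by
  rw [inner_sum]; simp [inner_smul_right]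

lemma bomp_self_inner (a : EuclideanSpace ℂ (Fin N)) (ha : ‖a‖ = 1) :
    (⟪a, a⟫ : ℂ) = 1 := by
  rw [inner_self_eq_norm_sq_to_K, ha]; norm_num

lemma bomp_orth (a : Fin M → EuclideanSpace ℂ (Fin N)) (ha : ∀ j, ‖a j‖ = 1)
    (b : EuclideanSpace ℂ (Fin N)) (T : Set (Fin M)) (w : Fin M → ℂ)
    (hw : ∀ j, w j ≠ 0 → j ∈ T)
    (hmin : ∀ z : Fin M → ℂ, (∀ j, z j ≠ 0 → j ∈ T) →
      ‖(∑ j, w j • a j) - b‖ ≤ ‖(∑ j, z j • a j) - b‖)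
    (k : Fin M) (hk : k ∈ T) :
    (⟪a k, b - ∑ j, w j • a j⟫ : ℂ) = 0 := by
  set r := b - ∑ j, w j • a j with hr
  set c : ℂ := ⟪a k, r⟫ with hc
  set z : Fin M → ℂ := fun j => w j + if j = k then c else 0 with hz
  have hzs : ∀ j, z j ≠ 0 → j ∈ T := by
    intro j hj
    by_cases h : j = k
    · exact h ▸ hk
    · apply hw; simpa [hz, h] using hj
  have hAz : (∑ j, z j • a j) = (∑ j, w j • a j) + c • a k := by
    simp only [hz, add_smul, Finset.sum_add_distrib, ite_smul, zero_smul]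
    rw [Finset.sum_ite_eq' Finset.univ k (fun j => c • a j)]
    simp
  have h1 := hmin z hzs
  rw [hAz] at h1
  have h2 : (∑ j, w j • a j) + c • a k - b = c • a k - r := by
    rw [hr]; abel
  rw [h2] at h1
  have h3 : ‖(∑ j, w j • a j) - b‖ = ‖r‖ := by rw [hr, norm_sub_rev]
  rw [h3] at h1
  have h4 : ‖c • a k - r‖ ^ 2 = ‖c • a k‖ ^ 2 - 2 * RCLike.re (⟪c • a k, r⟫ : ℂ) + ‖r‖ ^ 2 :=
    norm_sub_sq (𝕜 := ℂ) _ _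
  have h5 : (⟪c • a k, r⟫ : ℂ) = (starRingEnd ℂ) c * c := by
    rw [inner_smul_left, ← hc]
  have h6 : RCLike.re (⟪c • a k, r⟫ : ℂ) = ‖c‖ ^ 2 := by
    rw [h5, RCLike.conj_mul]; simp [← Complex.ofReal_pow]
  have h7 : ‖c • a k‖ ^ 2 = ‖c‖ ^ 2 := by
    rw [norm_smul, ha k]; ring
  have h8 : ‖r‖ ^ 2 ≤ ‖c • a k - r‖ ^ 2 := by
    apply pow_le_pow_left₀ (norm_nonneg _) h1
  rw [h4, h6, h7] at h8
  have h9 : ‖c‖ ^ 2 ≤ 0 := by nlinarith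
  have : c = 0 := by
    have := sq_nonneg ‖c‖
    have hc0 : ‖c‖ ^ 2 = 0 := le_antisymm h9 this
    simpa using pow_eq_zero_iff (n := 2) (by norm_num) |>.mp hc0
  exact this

-- arithmetic core
lemma bomp_arith (η σ m' X E : ℝ) (hη : 0 < η) (hm0 : 0 ≤ m') (hmσ : m' ≤ σ)
    (h51 : η * (5 * σ + 1) < 1) (hX : 0 ≤ X) (hE : 0 ≤ E) :
    2 * η * m' * ((1 + σ * η) * X + E) ≤ (3 * η * σ * X + E / 2) * (1 - (m' - 1) * η) := by
  have hσ : 0 ≤ σ := le_trans hm0 hmσ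
  have hXpart : 2 * η * m' * ((1 + σ * η) * X) ≤ 3 * η * σ * X * (1 - (m' - 1) * η) := by
    have key : 2 * m' * (1 + σ * η) ≤ 3 * σ * (1 - (m' - 1) * η) := by
      nlinarith [mul_nonneg (sub_nonneg.mpr hmσ) hη.le,
        mul_nonneg hσ (sub_nonneg.mpr h51.le),
        mul_nonneg (mul_nonneg hσ hη.le) (sub_nonneg.mpr hmσ)]
    calc 2 * η * m' * ((1 + σ * η) * X) = (2 * m' * (1 + σ * η)) * (η * X) := by ring
      _ ≤ (3 * σ * (1 - (m' - 1) * η)) * (η * X) := by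
          apply mul_le_mul_of_nonneg_right key (mul_nonneg hη.le hX)
      _ = 3 * η * σ * X * (1 - (m' - 1) * η) := by ring
  have hEpart : 2 * η * m' * E ≤ E / 2 * (1 - (m' - 1) * η) := by
    have key : 2 * η * m' ≤ 1 / 2 * (1 - (m' - 1) * η) := by
      nlinarith [mul_nonneg (sub_nonneg.mpr hmσ) hη.le]
    calc 2 * η * m' * E = (2 * η * m') * E := by ring
      _ ≤ (1 / 2 * (1 - (m' - 1) * η)) * E := mul_le_mul_of_nonneg_right key hE
      _ = E / 2 * (1 - (m' - 1) * η) := by ring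
  nlinarith [hXpart, hEpart]

end



set_option maxHeartbeats 2000000


/-- BOMP performance guarantee (Theorem 2.2): under the separation condition
and η(5s−4)(x_max/x_min) + (5/2)‖e‖₂/x_min < 1, the support of the BOMP output after s
iterations lies in the η-coherence band of supp(x), with each reconstructed index in the
band of a unique true support index. -/
theorem bomp_performance_guarantee
    {N M : ℕ} (a : Fin M → EuclideanSpace ℂ (Fin N))
    (ha : ∀ j, ‖a j‖ = 1)
    (x : Fin M → ℂ) (S : Finset (Fin M)) (s : ℕ)
    (hcard : S.card = s)
    (hsupp : ∀ j, x j ≠ 0 ↔ j ∈ S)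
    (e b : EuclideanSpace ℂ (Fin N))
    (hb : b = (∑ j, x j • a j) + e)
    (η : ℝ) (hη : 0 < η)
    -- the η-coherence band operator on index sets
    (B : Set (Fin M) → Set (Fin M))
    (hB : ∀ T, B T = {i | ∃ k ∈ T, η < ‖(inner ℂ (a i) (a k) : ℂ)‖})
    -- separation condition: B_η(i) ∩ B_η^{(2)}(j) = ∅ for distinct support indices
    (hsep : ∀ i ∈ S, ∀ j ∈ S, i ≠ j → B {i} ∩ B (B {j}) = ∅)
    (xmin xmax : ℝ) (hxmin : 0 < xmin)
    (hxminle : ∀ j ∈ S, xmin ≤ ‖x j‖)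
    (hxmaxle : ∀ j ∈ S, ‖x j‖ ≤ xmax)
    (hcond : η * (5 * (s : ℝ) - 4) * (xmax / xmin) + (5 / 2) * ‖e‖ / xmin < 1)
    -- a run of BOMP: supports Ss, estimates xs, residuals rs, selected indices im
    (Ss : ℕ → Set (Fin M)) (xs : ℕ → Fin M → ℂ)
    (rs : ℕ → EuclideanSpace ℂ (Fin N)) (im : ℕ → Fin M)
    (hS0 : Ss 0 = ∅) (hx0 : xs 0 = 0) (hr0 : rs 0 = b)
    (hstep : ∀ n, 1 ≤ n → n ≤ s →
      im n ∉ B (B (Ss (n - 1))) ∧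
      (∀ i, i ∉ B (B (Ss (n - 1))) →
        ‖(inner ℂ (rs (n - 1)) (a i) : ℂ)‖ ≤ ‖(inner ℂ (rs (n - 1)) (a (im n)) : ℂ)‖) ∧
      Ss n = Ss (n - 1) ∪ {im n} ∧
      (∀ j, xs n j ≠ 0 → j ∈ Ss n) ∧
      (∀ z : Fin M → ℂ, (∀ j, z j ≠ 0 → j ∈ Ss n) →
        ‖(∑ j, xs n j • a j) - b‖ ≤ ‖(∑ j, z j • a j) - b‖) ∧
      rs n = b - ∑ j, xs n j • a j) :
    -- conclusion for the output x̂ = xs s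
    (∀ i, xs s i ≠ 0 → i ∈ B ↑S) ∧
    ∃ f : Fin M → Fin M,
      (∀ i, xs s i ≠ 0 → f i ∈ S ∧ η < ‖(inner ℂ (a i) (a (f i)) : ℂ)‖) ∧
      (∀ i i', xs s i ≠ 0 → xs s i' ≠ 0 → f i = f i' → i = i') := by
  classical
  by_cases hs0 : s = 0
  · subst hs0
    rw [hx0]
    refine ⟨by simp, id, by simp, by simp⟩
  have hs1 : 1 ≤ s := Nat.one_le_iff_ne_zero.mpr hs0
  -- basic facts
  obtain ⟨j0, hj0⟩ : S.Nonempty := Finset.card_pos.mp (hcard ▸ hs1)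
  have hxx : xmin ≤ xmax := le_trans (hxminle j0 hj0) (hxmaxle j0 hj0)
  have hxmax : 0 < xmax := lt_of_lt_of_le hxmin hxx
  have hcond' : η * (5 * (s : ℝ) - 4) * xmax + 5 / 2 * ‖e‖ < xmin := by
    have h : η * (5 * (s : ℝ) - 4) * (xmax / xmin) + (5 / 2) * ‖e‖ / xmin
        = (η * (5 * (s : ℝ) - 4) * xmax + 5 / 2 * ‖e‖) / xmin := by
      field_simp
    rw [h, div_lt_one hxmin] at hcond
    exact hcond
  have h5s4 : (1:ℝ) ≤ 5 * (s:ℝ) - 4 := by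
    have : (1:ℝ) ≤ (s:ℝ) := by exact_mod_cast hs1
    linarith
  have hη54 : η * (5 * (s:ℝ) - 4) < 1 := by nlinarith [norm_nonneg e]
  have hη1 : η < 1 := by nlinarith
  have hself : ∀ k, η < ‖(inner ℂ (a k) (a k) : ℂ)‖ := by
    intro k
    rw [bomp_self_inner (a k) (ha k)]
    simpa using hη1
  have hsymm : ∀ i j : Fin M,
      ‖(inner ℂ (a i) (a j) : ℂ)‖ = ‖(inner ℂ (a j) (a i) : ℂ)‖ :=
    fun i j => bomp_inner_norm_symm (a i) (a j)
  -- characterization of Ss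
  have hSs : ∀ n, n ≤ s → Ss n = {i | ∃ k, 1 ≤ k ∧ k ≤ n ∧ im k = i} := by
    intro n
    induction n with
    | zero => intro _; rw [hS0]; ext i; simp
    | succ n IHn =>
      intro hns
      have h1 := (hstep (n+1) (by omega) hns).2.2.1
      have h2 : n + 1 - 1 = n := rfl
      rw [h2] at h1
      rw [h1, IHn (by omega)]
      ext i
      simp only [Set.mem_union, Set.mem_setOf_eq, Set.mem_singleton_iff]
      constructor
      · rintro (⟨k, hk1, hk2, hk3⟩ | h)
        · exact ⟨k, hk1, by omega, hk3⟩
        · exact ⟨n+1, by omega, le_rfl, h.symm⟩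
      · rintro ⟨k, hk1, hk2, hk3⟩
        by_cases h : k = n + 1
        · right; rw [← hk3, h]
        · left; exact ⟨k, hk1, by omega, hk3⟩
  -- coherence between distinct support elements
  have hScoh : ∀ i ∈ S, ∀ j ∈ S, i ≠ j → ‖(inner ℂ (a i) (a j) : ℂ)‖ ≤ η := by
    intro i hi j hj hij
    by_contra hcon
    push_neg at hcon
    have h1 : i ∈ B {i} := by rw [hB]; exact ⟨i, rfl, hself i⟩
    have h2 : i ∈ B (B {j}) := by
      have hij' : i ∈ B {j} := by rw [hB]; exact ⟨j, rfl, hcon⟩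
      rw [hB]; exact ⟨i, hij', hself i⟩
    have := hsep i hi j hj hij
    exact absurd (Set.mem_inter h1 h2) (by rw [this]; exact Set.notMem_empty i)
  -- no two distinct selected indices share a band element
  have hcommon : ∀ k k' (j : Fin M), 1 ≤ k → k < k' → k' ≤ s →
      η < ‖(inner ℂ (a (im k)) (a j) : ℂ)‖ → η < ‖(inner ℂ (a (im k')) (a j) : ℂ)‖ → False := by
    intro k k' j hk1 hkk hk's hj1 hj2
    have hmem : im k ∈ Ss (k' - 1) := by
      rw [hSs (k'-1) (by omega)]
      exact ⟨k, hk1, by omega, rfl⟩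
    have hjB : j ∈ B (Ss (k' - 1)) := by
      rw [hB]; exact ⟨im k, hmem, by rw [hsymm]; exact hj1⟩
    have : im k' ∈ B (B (Ss (k' - 1))) := by
      rw [hB]; exact ⟨j, hjB, hj2⟩
    exact (hstep k' (by omega) hk's).1 this

  -- pairwise coherence of selected indices
  have him_coh : ∀ p q, 1 ≤ p → p < q → q ≤ s →
      ‖(inner ℂ (a (im p)) (a (im q)) : ℂ)‖ ≤ η := by
    intro p q hp1 hpq hqs
    by_contra hcon
    push_neg at hcon
    apply (hstep q (by omega) hqs).1
    rw [hB]
    refine ⟨im p, ?_, by rw [hsymm]; exact hcon⟩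
    rw [hB]
    exact ⟨im p, by rw [hSs (q-1) (by omega)]; exact ⟨p, hp1, by omega, rfl⟩, hself _⟩
  have hss1 : (1:ℝ) ≤ (s:ℝ) := by exact_mod_cast hs1
  -- THE MAIN INDUCTION: every selected index is in the band of the support
  have hQ : ∀ n, n ≤ s → 1 ≤ n → ∃ j ∈ S, η < ‖(inner ℂ (a (im n)) (a j) : ℂ)‖ := by
    intro n
    induction n using Nat.strong_induction_on with
    | _ n IH =>
    intro hns hn1
    obtain ⟨m, rfl⟩ : ∃ m, n = m + 1 := ⟨n - 1, by omega⟩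
    have hmm : m ≤ s := by omega
    -- witnesses for earlier steps
    have hgex : ∀ k, ∃ j, (1 ≤ k ∧ k ≤ m) →
        (j ∈ S ∧ η < ‖(inner ℂ (a (im k)) (a j) : ℂ)‖) := by
      intro k
      by_cases hk : 1 ≤ k ∧ k ≤ m
      · obtain ⟨j, hj1, hj2⟩ := IH k (by omega) (by omega) hk.1
        exact ⟨j, fun _ => ⟨hj1, hj2⟩⟩
      · exact ⟨j0, fun h => absurd h hk⟩
    choose g hg using hgex
    -- a fresh support index i0
    have hJcard : ((Finset.Icc 1 m).image g).card < S.card := by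
      calc ((Finset.Icc 1 m).image g).card ≤ (Finset.Icc 1 m).card := Finset.card_image_le
        _ = m := by rw [Nat.card_Icc]; omega
        _ < S.card := by omega
    obtain ⟨i0, hi0S, hi0J⟩ := Finset.not_subset.mp
      (fun hsub => absurd (Finset.card_le_card hsub) (not_le.mpr hJcard))
    have hi0g : ∀ k, 1 ≤ k → k ≤ m → g k ≠ i0 := fun k h1 h2 hek =>
      hi0J (hek ▸ Finset.mem_image_of_mem g (Finset.mem_Icc.mpr ⟨h1, h2⟩))
    -- i0 is eligible
    have hi0nB : i0 ∉ B (B (Ss m)) := by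
      intro hcon
      rw [hB] at hcon
      obtain ⟨l, hl, hil⟩ := hcon
      rw [hB] at hl
      obtain ⟨t, ht, hlt⟩ := hl
      rw [hSs m hmm] at ht
      obtain ⟨p, hp1, hp2, rfl⟩ := ht
      have h1 : l ∈ B {i0} := by
        rw [hB]; exact ⟨i0, rfl, by rw [hsymm]; exact hil⟩
      have h2 : l ∈ B (B {g p}) := by
        rw [hB]
        refine ⟨im p, ?_, hlt⟩
        rw [hB]; exact ⟨g p, rfl, (hg p ⟨hp1, hp2⟩).2⟩
      have hne : i0 ≠ g p := fun hh => hi0g p hp1 hp2 hh.symm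
      have := hsep i0 hi0S (g p) (hg p ⟨hp1, hp2⟩).1 hne
      exact absurd (Set.mem_inter h1 h2) (by rw [this]; exact Set.notMem_empty l)
    -- eligible indices have small coherence with all selected indices
    have hcoh_gen : ∀ i, i ∉ B (B (Ss m)) → ∀ p, 1 ≤ p → p ≤ m →
        ‖(inner ℂ (a i) (a (im p)) : ℂ)‖ ≤ η := by
      intro i hi p hp1 hp2
      by_contra hcon
      push_neg at hcon
      apply hi
      rw [hB]
      refine ⟨im p, ?_, hcon⟩
      rw [hB]
      exact ⟨im p, by rw [hSs m hmm]; exact ⟨p, hp1, hp2, rfl⟩, hself _⟩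
    -- selected index im p has small coherence with support indices other than g p
    have hcoh_sel : ∀ p, 1 ≤ p → p ≤ m → ∀ j ∈ S, j ≠ g p →
        ‖(inner ℂ (a (im p)) (a j) : ℂ)‖ ≤ η := by
      intro p hp1 hp2 j hjS hne
      by_contra hcon
      push_neg at hcon
      have h1 : im p ∈ B {g p} := by
        rw [hB]; exact ⟨g p, rfl, (hg p ⟨hp1, hp2⟩).2⟩
      have h2 : im p ∈ B (B {j}) := by
        rw [hB]
        refine ⟨im p, ?_, hself _⟩
        rw [hB]; exact ⟨j, rfl, hcon⟩
      have := hsep (g p) (hg p ⟨hp1, hp2⟩).1 j hjS (fun hh => hne hh.symm)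
      exact absurd (Set.mem_inter h1 h2) (by rw [this]; exact Set.notMem_empty (im p))
    have him_coh' : ∀ p q, 1 ≤ p → p ≤ m → 1 ≤ q → q ≤ m → p ≠ q →
        ‖(inner ℂ (a (im p)) (a (im q)) : ℂ)‖ ≤ η := by
      intro p q hp1 hpm hq1 hqm hne
      rcases lt_or_gt_of_ne hne with h | h
      · exact him_coh p q hp1 h (by omega)
      · rw [hsymm]; exact him_coh q p hq1 h (by omega)
    -- the current estimate and residual
    set xh := xs m with hxh
    set r := rs m with hrs
    set L := ∑ j, ‖xh j‖ with hLdef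
    have hL0 : (0:ℝ) ≤ L := Finset.sum_nonneg (fun j _ => norm_nonneg _)
    have hrr : r = b - ∑ j, xh j • a j := by
      rcases Nat.eq_zero_or_pos m with h0 | h1
      · subst h0
        rw [hrs, hxh, hr0, hx0]
        simp
      · exact (hstep m h1 hmm).2.2.2.2.2
    have hxhsupp : ∀ j, xh j ≠ 0 → ∃ p, 1 ≤ p ∧ p ≤ m ∧ im p = j := by
      intro j hj
      rcases Nat.eq_zero_or_pos m with h0 | h1
      · exfalso; apply hj; rw [hxh, h0, hx0]; rfl
      · have := (hstep m h1 hmm).2.2.2.1 j hj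
        rw [hSs m hmm] at this
        exact this
    set β := (1 + ((s:ℝ) - 1) * η) * xmax + ‖e‖ with hβ
    have hβ0 : 0 ≤ β := by
      have h1 : 0 ≤ ((s:ℝ) - 1) * η := mul_nonneg (by linarith) hη.le
      nlinarith [norm_nonneg e]
    -- Gram-type bound on each coefficient
    have hkey : ∀ k, xh k ≠ 0 → ‖xh k‖ ≤ β + η * (L - ‖xh k‖) := by
      intro k hk
      obtain ⟨p, hp1, hp2, himp⟩ := hxhsupp k hk
      have hm1 : 1 ≤ m := le_trans hp1 hp2
      have horth : (inner ℂ (a k) (b - ∑ j, xh j • a j) : ℂ) = 0 :=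
        bomp_orth a ha b (Ss m) xh ((hstep m hm1 hmm).2.2.2.1)
          ((hstep m hm1 hmm).2.2.2.2.1) k ((hstep m hm1 hmm).2.2.2.1 k hk)
      have hitem : (inner ℂ (a k) b : ℂ) = ∑ j, xh j * inner ℂ (a k) (a j) := by
        rw [inner_sub_right] at horth
        rw [sub_eq_zero.mp horth, bomp_inner_expand]
      have hxk : xh k = (inner ℂ (a k) b : ℂ) -
          ∑ j ∈ Finset.univ.erase k, xh j * inner ℂ (a k) (a j) := by
        rw [hitem, ← Finset.add_sum_erase Finset.univ
          (fun j => xh j * (inner ℂ (a k) (a j) : ℂ)) (Finset.mem_univ k),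
          bomp_self_inner (a k) (ha k), mul_one]
        ring
      have hb1 : ‖(inner ℂ (a k) b : ℂ)‖ ≤ β := by
        rw [hb, inner_add_right, bomp_inner_expand]
        have h1 : ‖(∑ j, x j * (inner ℂ (a k) (a j) : ℂ))‖ ≤
            xmax + ((s:ℝ) - 1) * (xmax * η) := by
          have hrestr : (∑ j, x j * (inner ℂ (a k) (a j) : ℂ)) =
              ∑ j ∈ S, x j * inner ℂ (a k) (a j) := by
            refine (Finset.sum_subset S.subset_univ (fun j _ hj => ?_)).symm
            have : x j = 0 := by
              by_contra hxj; exact hj ((hsupp j).mp hxj)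
            rw [this, zero_mul]
          rw [hrestr, ← Finset.add_sum_erase S
            (fun j => x j * (inner ℂ (a k) (a j) : ℂ)) (hg p ⟨hp1, hp2⟩).1]
          refine (norm_add_le _ _).trans (add_le_add ?_ ?_)
          · rw [norm_mul]
            calc ‖x (g p)‖ * ‖(inner ℂ (a k) (a (g p)) : ℂ)‖
                ≤ xmax * 1 := by
                  apply mul_le_mul (hxmaxle _ (hg p ⟨hp1, hp2⟩).1) ?_ (norm_nonneg _) hxmax.le
                  calc ‖(inner ℂ (a k) (a (g p)) : ℂ)‖ ≤ ‖a k‖ * ‖a (g p)‖ :=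
                        norm_inner_le_norm _ _
                    _ = 1 := by rw [ha, ha, mul_one]
              _ = xmax := mul_one xmax
          · calc ‖∑ j ∈ S.erase (g p), x j * (inner ℂ (a k) (a j) : ℂ)‖
                ≤ ∑ j ∈ S.erase (g p), ‖x j * (inner ℂ (a k) (a j) : ℂ)‖ :=
                  norm_sum_le _ _
              _ ≤ ∑ j ∈ S.erase (g p), xmax * η := by
                  refine Finset.sum_le_sum (fun j hj => ?_)
                  rw [norm_mul]
                  obtain ⟨hne, hjS⟩ := Finset.mem_erase.mp hj
                  have hcoh : ‖(inner ℂ (a k) (a j) : ℂ)‖ ≤ η := by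
                    rw [← himp]; exact hcoh_sel p hp1 hp2 j hjS hne
                  exact mul_le_mul (hxmaxle j hjS) hcoh (norm_nonneg _) hxmax.le
              _ = ((s:ℝ) - 1) * (xmax * η) := by
                  rw [Finset.sum_const, Finset.card_erase_of_mem (hg p ⟨hp1, hp2⟩).1,
                    hcard, nsmul_eq_mul, Nat.cast_sub hs1]
                  norm_num
        have h2 : ‖(inner ℂ (a k) e : ℂ)‖ ≤ ‖e‖ := by
          calc ‖(inner ℂ (a k) e : ℂ)‖ ≤ ‖a k‖ * ‖e‖ := norm_inner_le_norm _ _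
            _ = ‖e‖ := by rw [ha, one_mul]
        calc ‖(∑ j, x j * (inner ℂ (a k) (a j) : ℂ)) + inner ℂ (a k) e‖
            ≤ ‖(∑ j, x j * (inner ℂ (a k) (a j) : ℂ))‖ + ‖(inner ℂ (a k) e : ℂ)‖ :=
              norm_add_le _ _
          _ ≤ (xmax + ((s:ℝ) - 1) * (xmax * η)) + ‖e‖ := add_le_add h1 h2
          _ = β := by rw [hβ]; ring
      have hrest : ‖∑ j ∈ Finset.univ.erase k, xh j * (inner ℂ (a k) (a j) : ℂ)‖ ≤
          η * (L - ‖xh k‖) := by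
        calc ‖∑ j ∈ Finset.univ.erase k, xh j * (inner ℂ (a k) (a j) : ℂ)‖
            ≤ ∑ j ∈ Finset.univ.erase k, ‖xh j * (inner ℂ (a k) (a j) : ℂ)‖ :=
              norm_sum_le _ _
          _ ≤ ∑ j ∈ Finset.univ.erase k, η * ‖xh j‖ := by
              refine Finset.sum_le_sum (fun j hj => ?_)
              rw [norm_mul]
              by_cases hxj : xh j = 0
              · simp [hxj]
              · obtain ⟨q, hq1, hq2, himq⟩ := hxhsupp j hxj
                have hne : p ≠ q := by
                  intro hh
                  apply (Finset.mem_erase.mp hj).1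
                  rw [← himq, ← hh, himp]
                have hcoh : ‖(inner ℂ (a k) (a j) : ℂ)‖ ≤ η := by
                  rw [← himp, ← himq]
                  exact him_coh' p q hp1 hp2 hq1 hq2 hne
                rw [mul_comm]
                exact mul_le_mul_of_nonneg_right hcoh (norm_nonneg _)
          _ = η * ∑ j ∈ Finset.univ.erase k, ‖xh j‖ := by rw [Finset.mul_sum]
          _ = η * (L - ‖xh k‖) := by
              congr 1
              rw [hLdef, ← Finset.add_sum_erase Finset.univ (fun j => ‖xh j‖)
                (Finset.mem_univ k)]
              ring
      calc ‖xh k‖ = ‖(inner ℂ (a k) b : ℂ) -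
            ∑ j ∈ Finset.univ.erase k, xh j * (inner ℂ (a k) (a j) : ℂ)‖ := by rw [← hxk]
        _ ≤ ‖(inner ℂ (a k) b : ℂ)‖ +
            ‖∑ j ∈ Finset.univ.erase k, xh j * (inner ℂ (a k) (a j) : ℂ)‖ :=
              norm_sub_le _ _
        _ ≤ β + η * (L - ‖xh k‖) := add_le_add hb1 hrest
    -- summing over the support of xh
    have hLle : L ≤ (m:ℝ) * β + ((m:ℝ) - 1) * η * L := by
      classical
      set U := Finset.univ.filter (fun k => xh k ≠ 0) with hU
      have hLU : L = ∑ k ∈ U, ‖xh k‖ := by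
        rw [hLdef]
        refine (Finset.sum_subset (Finset.filter_subset _ _) (fun k _ hk => ?_)).symm
        have : xh k = 0 := by
          by_contra hh
          exact hk (Finset.mem_filter.mpr ⟨Finset.mem_univ k, hh⟩)
        rw [this, norm_zero]
      have hUm : (U.card : ℝ) ≤ (m:ℝ) := by
        have hsub : U ⊆ (Finset.Icc 1 m).image im := by
          intro k hk
          obtain ⟨p, hp1, hp2, himp⟩ := hxhsupp k (Finset.mem_filter.mp hk).2
          exact Finset.mem_image.mpr ⟨p, Finset.mem_Icc.mpr ⟨hp1, hp2⟩, himp⟩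
        have : U.card ≤ m := by
          calc U.card ≤ ((Finset.Icc 1 m).image im).card := Finset.card_le_card hsub
            _ ≤ (Finset.Icc 1 m).card := Finset.card_image_le
            _ = m := by rw [Nat.card_Icc]; omega
        exact_mod_cast this
      rcases Finset.eq_empty_or_nonempty U with hUe | hUne
      · have hL00 : L = 0 := by rw [hLU, hUe, Finset.sum_empty]
        rw [hL00]
        have : (0:ℝ) ≤ (m:ℝ) * β := mul_nonneg (Nat.cast_nonneg m) hβ0
        nlinarith
      · have hU1 : (1:ℝ) ≤ (U.card : ℝ) := by
          exact_mod_cast Finset.card_pos.mpr hUne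
        have hsum : ∑ k ∈ U, ‖xh k‖ ≤ ∑ k ∈ U, (β + η * (L - ‖xh k‖)) :=
          Finset.sum_le_sum (fun k hk => hkey k (Finset.mem_filter.mp hk).2)
        have hcomp : ∑ k ∈ U, (β + η * (L - ‖xh k‖)) =
            (U.card : ℝ) * (β + η * L) - η * L := by
          have : ∀ k ∈ U, β + η * (L - ‖xh k‖) = (β + η * L) - η * ‖xh k‖ := by
            intro k _; ring
          rw [Finset.sum_congr rfl this, Finset.sum_sub_distrib, Finset.sum_const,
            ← Finset.mul_sum, ← hLU, nsmul_eq_mul]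
        rw [← hLU] at hsum
        rw [hcomp] at hsum
        nlinarith [mul_le_mul_of_nonneg_right hUm hβ0,
          mul_nonneg (mul_nonneg (sub_nonneg.mpr hUm) hη.le) hL0]
    -- expansion of inner products with the residual
    have hExp : ∀ i : Fin M, (inner ℂ (a i) r : ℂ) =
        (∑ j, x j * inner ℂ (a i) (a j)) + inner ℂ (a i) e -
          ∑ j, xh j * inner ℂ (a i) (a j) := by
      intro i
      rw [hrr, inner_sub_right, hb, inner_add_right, bomp_inner_expand, bomp_inner_expand]
    have hxhpart : ∀ i, i ∉ B (B (Ss m)) →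
        ‖∑ j, xh j * (inner ℂ (a i) (a j) : ℂ)‖ ≤ η * L := by
      intro i hi
      calc ‖∑ j, xh j * (inner ℂ (a i) (a j) : ℂ)‖
          ≤ ∑ j, ‖xh j * (inner ℂ (a i) (a j) : ℂ)‖ := norm_sum_le _ _
        _ ≤ ∑ j, η * ‖xh j‖ := by
            refine Finset.sum_le_sum (fun j _ => ?_)
            rw [norm_mul]
            by_cases hxj : xh j = 0
            · simp [hxj]
            · obtain ⟨q, hq1, hq2, himq⟩ := hxhsupp j hxj
              have hcoh : ‖(inner ℂ (a i) (a j) : ℂ)‖ ≤ η := by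
                rw [← himq]; exact hcoh_gen i hi q hq1 hq2
              rw [mul_comm]
              exact mul_le_mul_of_nonneg_right hcoh (norm_nonneg _)
        _ = η * L := by rw [← Finset.mul_sum, hLdef]
    have herr : ∀ i : Fin M, ‖(inner ℂ (a i) e : ℂ)‖ ≤ ‖e‖ := by
      intro i
      calc ‖(inner ℂ (a i) e : ℂ)‖ ≤ ‖a i‖ * ‖e‖ := norm_inner_le_norm _ _
        _ = ‖e‖ := by rw [ha, one_mul]
    -- suppose the new selection is NOT in the band of the support
    by_contra hconn
    push_neg at hconn
    -- lower bound at i0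
    have hlow : xmin - ((s:ℝ) - 1) * (xmax * η) - η * L - ‖e‖ ≤ ‖(inner ℂ (a i0) r : ℂ)‖ := by
      have hWeq : (inner ℂ (a i0) r : ℂ) = x i0 +
          ((∑ j ∈ Finset.univ.erase i0, x j * inner ℂ (a i0) (a j)) + inner ℂ (a i0) e -
            ∑ j, xh j * inner ℂ (a i0) (a j)) := by
        rw [hExp i0, ← Finset.add_sum_erase Finset.univ
          (fun j => x j * (inner ℂ (a i0) (a j) : ℂ)) (Finset.mem_univ i0),
          bomp_self_inner (a i0) (ha i0), mul_one]
        ring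
      have hW : ‖(∑ j ∈ Finset.univ.erase i0, x j * (inner ℂ (a i0) (a j) : ℂ)) +
          inner ℂ (a i0) e - ∑ j, xh j * (inner ℂ (a i0) (a j) : ℂ)‖ ≤
          ((s:ℝ) - 1) * (xmax * η) + ‖e‖ + η * L := by
        refine (norm_sub_le _ _).trans (add_le_add ((norm_add_le _ _).trans
          (add_le_add ?_ (herr i0))) (hxhpart i0 hi0nB))
        have hrestr : (∑ j ∈ Finset.univ.erase i0, x j * (inner ℂ (a i0) (a j) : ℂ)) =
            ∑ j ∈ S.erase i0, x j * inner ℂ (a i0) (a j) := by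
          refine (Finset.sum_subset (Finset.erase_subset_erase i0 S.subset_univ)
            (fun j hj hjn => ?_)).symm
          have hji0 : j ≠ i0 := (Finset.mem_erase.mp hj).1
          have : x j = 0 := by
            by_contra hxj
            exact hjn (Finset.mem_erase.mpr ⟨hji0, (hsupp j).mp hxj⟩)
          rw [this, zero_mul]
        rw [hrestr]
        calc ‖∑ j ∈ S.erase i0, x j * (inner ℂ (a i0) (a j) : ℂ)‖
            ≤ ∑ j ∈ S.erase i0, ‖x j * (inner ℂ (a i0) (a j) : ℂ)‖ := norm_sum_le _ _
          _ ≤ ∑ j ∈ S.erase i0, xmax * η := by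
              refine Finset.sum_le_sum (fun j hj => ?_)
              obtain ⟨hne, hjS⟩ := Finset.mem_erase.mp hj
              rw [norm_mul]
              exact mul_le_mul (hxmaxle j hjS)
                (hScoh i0 hi0S j hjS (fun hh => hne hh.symm)) (norm_nonneg _) hxmax.le
          _ = ((s:ℝ) - 1) * (xmax * η) := by
              rw [Finset.sum_const, Finset.card_erase_of_mem hi0S, hcard,
                nsmul_eq_mul, Nat.cast_sub hs1]
              norm_num
      have hxi0 : xmin ≤ ‖x i0‖ := hxminle i0 hi0S
      have htri : ‖x i0‖ ≤ ‖(inner ℂ (a i0) r : ℂ)‖ +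
          ‖(∑ j ∈ Finset.univ.erase i0, x j * (inner ℂ (a i0) (a j) : ℂ)) +
            inner ℂ (a i0) e - ∑ j, xh j * (inner ℂ (a i0) (a j) : ℂ)‖ := by
        calc ‖x i0‖ = ‖(inner ℂ (a i0) r : ℂ) -
            ((∑ j ∈ Finset.univ.erase i0, x j * (inner ℂ (a i0) (a j) : ℂ)) +
              inner ℂ (a i0) e - ∑ j, xh j * (inner ℂ (a i0) (a j) : ℂ))‖ := by
              rw [hWeq]; ring_nf
          _ ≤ _ := norm_sub_le _ _
      linarith
    -- upper bound at the new selection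
    have hnB2 : im (m+1) ∉ B (B (Ss m)) := (hstep (m+1) (by omega) hns).1
    have hup : ‖(inner ℂ (a (im (m+1))) r : ℂ)‖ ≤ (s:ℝ) * (xmax * η) + ‖e‖ + η * L := by
      rw [hExp (im (m+1))]
      refine (norm_sub_le _ _).trans (add_le_add ((norm_add_le _ _).trans
        (add_le_add ?_ (herr _))) (hxhpart _ hnB2))
      have hrestr : (∑ j, x j * (inner ℂ (a (im (m+1))) (a j) : ℂ)) =
          ∑ j ∈ S, x j * inner ℂ (a (im (m+1))) (a j) := by
        refine (Finset.sum_subset S.subset_univ (fun j _ hj => ?_)).symm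
        have : x j = 0 := by
          by_contra hxj; exact hj ((hsupp j).mp hxj)
        rw [this, zero_mul]
      rw [hrestr]
      calc ‖∑ j ∈ S, x j * (inner ℂ (a (im (m+1))) (a j) : ℂ)‖
          ≤ ∑ j ∈ S, ‖x j * (inner ℂ (a (im (m+1))) (a j) : ℂ)‖ := norm_sum_le _ _
        _ ≤ ∑ j ∈ S, xmax * η := by
            refine Finset.sum_le_sum (fun j hj => ?_)
            rw [norm_mul]
            exact mul_le_mul (hxmaxle j hj) (hconn j hj) (norm_nonneg _) hxmax.le
        _ = (s:ℝ) * (xmax * η) := by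
            rw [Finset.sum_const, hcard, nsmul_eq_mul]
    -- the selection rule
    have hcmp : ‖(inner ℂ r (a i0) : ℂ)‖ ≤ ‖(inner ℂ r (a (im (m+1))) : ℂ)‖ :=
      (hstep (m+1) (by omega) hns).2.1 i0 hi0nB
    have hsym1 : ‖(inner ℂ (a i0) r : ℂ)‖ = ‖(inner ℂ r (a i0) : ℂ)‖ :=
      bomp_inner_norm_symm _ _
    have hsym2 : ‖(inner ℂ (a (im (m+1))) r : ℂ)‖ = ‖(inner ℂ r (a (im (m+1))) : ℂ)‖ :=
      bomp_inner_norm_symm _ _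
    have hchain : xmin ≤ (2*(s:ℝ) - 1) * (xmax * η) + 2 * (η * L) + 2 * ‖e‖ := by
      have := hcmp
      rw [← hsym1, ← hsym2] at this
      linarith
    -- arithmetic conclusion
    have hms : (m:ℝ) + 1 ≤ (s:ℝ) := by exact_mod_cast hns
    have hD : 0 < 1 - ((m:ℝ) - 1) * η := by nlinarith
    have harith := bomp_arith η ((s:ℝ) - 1) (m:ℝ) xmax ‖e‖ hη (Nat.cast_nonneg m)
      (by linarith) (by have : 5 * ((s:ℝ)-1) + 1 = 5 * (s:ℝ) - 4 := by ring
                        rw [this]; exact hη54) hxmax.le (norm_nonneg e)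
    have hLD : L * (1 - ((m:ℝ) - 1) * η) ≤ (m:ℝ) * β := by nlinarith [hLle]
    have h2ηL : 2 * (η * L) ≤ 3 * η * ((s:ℝ) - 1) * xmax + ‖e‖ / 2 := by
      have hfin : (2 * (η * L)) * (1 - ((m:ℝ) - 1) * η) ≤
          (3 * η * ((s:ℝ) - 1) * xmax + ‖e‖ / 2) * (1 - ((m:ℝ) - 1) * η) := by
        calc (2 * (η * L)) * (1 - ((m:ℝ) - 1) * η) = 2 * η * (L * (1 - ((m:ℝ) - 1) * η)) := by
              ring
          _ ≤ 2 * η * ((m:ℝ) * β) :=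
              mul_le_mul_of_nonneg_left hLD (by positivity)
          _ = 2 * η * (m:ℝ) * ((1 + ((s:ℝ) - 1) * η) * xmax + ‖e‖) := by rw [hβ]; ring
          _ ≤ _ := harith
      exact le_of_mul_le_mul_right hfin hD
    nlinarith [hchain, h2ηL, hcond']
  -- ASSEMBLY
  have hfinsupp : ∀ i, xs s i ≠ 0 → ∃ k, 1 ≤ k ∧ k ≤ s ∧ im k = i := by
    intro i hi
    have := (hstep s hs1 le_rfl).2.2.2.1 i hi
    rw [hSs s le_rfl] at this
    exact this
  have hband : ∀ i, xs s i ≠ 0 → ∃ j ∈ S, η < ‖(inner ℂ (a i) (a j) : ℂ)‖ := by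
    intro i hi
    obtain ⟨k, hk1, hk2, rfl⟩ := hfinsupp i hi
    exact hQ k hk2 hk1
  constructor
  · intro i hi
    obtain ⟨j, hjS, hjB⟩ := hband i hi
    rw [hB]
    exact ⟨j, hjS, hjB⟩
  · have hchoice : ∀ i : Fin M, ∃ j : Fin M,
        xs s i ≠ 0 → (j ∈ S ∧ η < ‖(inner ℂ (a i) (a j) : ℂ)‖) := by
      intro i
      by_cases hi : xs s i ≠ 0
      · obtain ⟨j, hj1, hj2⟩ := hband i hi
        exact ⟨j, fun _ => ⟨hj1, hj2⟩⟩
      · exact ⟨i, fun h => absurd h hi⟩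
    choose f hf using hchoice
    refine ⟨f, fun i hi => hf i hi, ?_⟩
    intro i i' hi hi' hff
    obtain ⟨hf1S, hf1B⟩ := hf i hi
    obtain ⟨hf2S, hf2B⟩ := hf i' hi'
    rw [hff] at hf1B
    obtain ⟨k, hk1, hk2, rfl⟩ := hfinsupp i hi
    obtain ⟨k', hk'1, hk'2, rfl⟩ := hfinsupp i' hi'
    rcases lt_trichotomy k k' with h | h | h
    · exact (hcommon k k' (f (im k')) hk1 h hk'2 hf1B hf2B).elim
    · rw [h]
    · exact (hcommon k' k (f (im k')) hk'1 h hk2 hf2B hf1B).elim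
end
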